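/- arXiv:2204.12146 — 2 statements merged into one kernel-verified Lean document; each statement's English description precedes it below -/
import Mathlib

section
/- Let d ≥ 1 and let c_d be the constant in Nash's inequality. Then for all u ∈ L¹(ℝ^d) ∩ H¹(ℝ^d) one has ‖u‖_{L²}^{1+2/d} ≤ c_d ‖∇u‖_{L²} ‖u‖_{L¹}^{2/d}. -/
open MeasureTheory Set ENNReal NNReal

set_option maxHeartbeats 1000000

namespace NashProofAux

variable {d : ℕ}

lemma ofReal_norm_eq_coe_nnnorm {E : Type*} [SeminormedAddCommGroup E] (a : E) :
    ENNReal.ofReal ‖a‖ = (‖a‖₊ : ℝ≥0∞) := by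
  rw [ofReal_norm]; rfl

lemma ofReal_integral_norm_eq_lintegral_nnnorm {α P : Type*} [MeasurableSpace α] {μ : Measure α}
    [NormedAddCommGroup P] {f : α → P} (hf : Integrable f μ) :
    ENNReal.ofReal (∫ x, ‖f x‖ ∂μ) = ∫⁻ x, (‖f x‖₊ : ℝ≥0∞) ∂μ :=
  ofReal_integral_norm_eq_lintegral_enorm hf



def cube (L : ℝ) (z : Fin d → ℤ) : Set (EuclideanSpace ℝ (Fin d)) :=
  {x | ∀ i, x i ∈ Set.Ico (z i * L) (z i * L + L)}

lemma cube_eq_iInter (L : ℝ) (z : Fin d → ℤ) : cube L z = ⋂ i, ((EuclideanSpace.proj i : EuclideanSpace ℝ (Fin d) →L[ℝ] ℝ) ⁻¹' (Set.Ico ((z i : ℝ) * L) (z i * L + L))) := by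
  ext x; simp [cube, Set.mem_iInter, PiLp.proj_apply]

lemma cube_measurable (L : ℝ) (z : Fin d → ℤ) : MeasurableSet (cube L z) := by
  rw [cube_eq_iInter]
  exact MeasurableSet.iInter fun i =>
    ((EuclideanSpace.proj i : EuclideanSpace ℝ (Fin d) →L[ℝ] ℝ).continuous).measurable measurableSet_Ico

lemma cube_convex (L : ℝ) (z : Fin d → ℤ) : Convex ℝ (cube L z) := by
  rw [cube_eq_iInter]
  exact convex_iInter fun i => (convex_Ico _ _).linear_preimage (EuclideanSpace.proj i : _ →L[ℝ] ℝ).toLinearMap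

lemma cube_pairwise_disjoint (L : ℝ) (hL : 0 < L) :
    Pairwise (Function.onFun Disjoint (cube (d := d) L)) := by
  intro z w hzw
  rw [Function.onFun, Set.disjoint_left]
  rintro x hx hx'
  apply hzw
  funext i
  have h1 := hx i; have h2 := hx' i
  simp only [Set.mem_Ico] at h1 h2
  have : (z i : ℝ) = w i := by
    by_contra hne
    rcases lt_or_gt_of_ne hne with h | h
    · have : (z i : ℝ) + 1 ≤ w i := by exact_mod_cast Int.add_one_le_iff.mpr (by exact_mod_cast h)
      nlinarith [h1.1, h1.2, h2.1, h2.2]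
    · have : (w i : ℝ) + 1 ≤ z i := by exact_mod_cast Int.add_one_le_iff.mpr (by exact_mod_cast h)
      nlinarith [h1.1, h1.2, h2.1, h2.2]
  exact_mod_cast this

lemma cube_iUnion (L : ℝ) (hL : 0 < L) : (⋃ z, cube (d := d) L z) = Set.univ := by
  ext x
  simp only [Set.mem_iUnion, Set.mem_univ, iff_true]
  refine ⟨fun i => ⌊x i / L⌋, fun i => ?_⟩
  constructor
  · have := Int.floor_le (x i / L)
    calc (⌊x i / L⌋ : ℝ) * L ≤ (x i / L) * L := by nlinarith
    _ = x i := by field_simp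
  · have := Int.lt_floor_add_one (x i / L)
    have h2 : x i / L * L < (⌊x i / L⌋ + 1) * L := by nlinarith
    have h3 : x i / L * L = x i := by field_simp
    nlinarith

lemma cube_volume (L : ℝ) (hL : 0 < L) (z : Fin d → ℤ) :
    volume (cube L z) = ENNReal.ofReal L ^ d := by
  have he : cube L z = (MeasurableEquiv.toLp 2 (Fin d → ℝ)).symm ⁻¹'
      (Set.univ.pi fun i => Set.Ico ((z i : ℝ) * L) (z i * L + L)) := by
    ext x; simp [cube, Set.mem_pi]
  rw [he, (EuclideanSpace.volume_preserving_symm_measurableEquiv_toLp (Fin d)).measure_preimage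
    (MeasurableSet.univ_pi fun i => measurableSet_Ico).nullMeasurableSet]
  rw [volume_pi_pi]
  simp [Real.volume_Ico]




lemma ftc_bound {u : EuclideanSpace ℝ (Fin d) → ℝ} (hu : Differentiable ℝ u)
    (x h : EuclideanSpace ℝ (Fin d)) :
    (‖u (x + h) - u x‖₊ : ℝ≥0∞) ^ 2 ≤
      (‖h‖₊ : ℝ≥0∞) ^ 2 * ∫⁻ t in Set.Ioc (0:ℝ) 1, (‖fderiv ℝ u (x + t • h)‖₊ : ℝ≥0∞) ^ 2 := by
  rcases eq_or_ne h 0 with rfl | hh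
  · simp
  set G : ℝ → ℝ := fun t => ‖fderiv ℝ u (x + t • h)‖ with hG
  have hmeasG : Measurable G := by
    have : Measurable (fun t : ℝ => fderiv ℝ u (x + t • h)) :=
      (measurable_fderiv ℝ u).comp (continuous_const.add (continuous_id.smul continuous_const)).measurable
    exact this.norm
  rcases eq_or_ne (∫⁻ t in Set.Ioc (0:ℝ) 1, (‖fderiv ℝ u (x + t • h)‖₊ : ℝ≥0∞) ^ 2) ⊤ with htop | hfin
  · rw [htop, ENNReal.mul_top]
    · exact le_top
    · simpa using hh
  -- G² is integrable on Ioc 0 1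
  have hG2 : IntegrableOn (fun t => G t ^ 2) (Set.Ioc (0:ℝ) 1) volume := by
    refine ⟨(hmeasG.pow_const 2).aestronglyMeasurable, ?_⟩
    rw [HasFiniteIntegral]
    calc ∫⁻ t in Set.Ioc (0:ℝ) 1, ‖G t ^ 2‖₊
        = ∫⁻ t in Set.Ioc (0:ℝ) 1, (‖fderiv ℝ u (x + t • h)‖₊ : ℝ≥0∞) ^ 2 := by
          refine lintegral_congr fun t => ?_
          simp only [hG, nnnorm_pow, nnnorm_norm, ENNReal.coe_pow]
      _ < ⊤ := hfin.lt_top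
  have hG1 : IntegrableOn G (Set.Ioc (0:ℝ) 1) volume := by
    refine Integrable.mono' (hG2.add (integrable_const 1)) hmeasG.aestronglyMeasurable ?_
    filter_upwards with t
    simp only [Pi.add_apply]
    rw [Real.norm_eq_abs, abs_of_nonneg (norm_nonneg (fderiv ℝ u (x + t • h)))]
    nlinarith [sq_nonneg (G t - 1), norm_nonneg (fderiv ℝ u (x + t • h))]
  -- FTC
  set φ : ℝ → ℝ := fun t => (fderiv ℝ u (x + t • h)) h with hφ
  have hφmeas : Measurable φ := by
    have h1 : Measurable (fun t : ℝ => fderiv ℝ u (x + t • h)) :=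
      (measurable_fderiv ℝ u).comp
        (continuous_const.add (continuous_id.smul continuous_const)).measurable
    exact (ContinuousLinearMap.apply ℝ ℝ h).continuous.measurable.comp h1
  have hφint : IntervalIntegrable φ volume 0 1 := by
    rw [intervalIntegrable_iff_integrableOn_Ioc_of_le zero_le_one]
    refine Integrable.mono' (hG1.mul_const ‖h‖) hφmeas.aestronglyMeasurable ?_
    filter_upwards with t
    exact (fderiv ℝ u (x + t • h)).le_opNorm h
  have hderiv : ∀ t ∈ Set.uIcc (0:ℝ) 1, HasDerivAt (fun s => u (x + s • h)) (φ t) t := by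
    intro t _
    have h1 : HasDerivAt (fun s : ℝ => x + s • h) h t := by
      simpa using ((hasDerivAt_id t).smul_const h).const_add x
    exact (hu (x + t • h)).hasFDerivAt.comp_hasDerivAt t h1
  have hftc : ∫ t in (0:ℝ)..1, φ t = u (x + h) - u x := by
    have := intervalIntegral.integral_eq_sub_of_hasDerivAt hderiv hφint
    simpa using this
  have hGnonneg : 0 ≤ ∫ t in Set.Ioc (0:ℝ) 1, G t :=
    integral_nonneg fun t => norm_nonneg _
  have hnormbound : ‖u (x + h) - u x‖ ≤ ‖h‖ * ∫ t in Set.Ioc (0:ℝ) 1, G t := by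
    rw [← hftc]
    calc ‖∫ t in (0:ℝ)..1, φ t‖ ≤ ∫ t in (0:ℝ)..1, ‖φ t‖ :=
          intervalIntegral.norm_integral_le_integral_norm zero_le_one
      _ ≤ ∫ t in (0:ℝ)..1, G t * ‖h‖ := by
          rw [intervalIntegral.integral_of_le zero_le_one,
            intervalIntegral.integral_of_le zero_le_one]
          refine integral_mono_of_nonneg (Filter.Eventually.of_forall fun t => norm_nonneg _)
            (hG1.mul_const ‖h‖) ?_
          filter_upwards with t
          exact (fderiv ℝ u (x + t • h)).le_opNorm h
      _ = ‖h‖ * ∫ t in Set.Ioc (0:ℝ) 1, G t := by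
          rw [intervalIntegral.integral_of_le zero_le_one, integral_mul_const, mul_comm]
  -- pass to ENNReal
  have step1 : (‖u (x + h) - u x‖₊ : ℝ≥0∞) ≤
      (‖h‖₊ : ℝ≥0∞) * ∫⁻ t in Set.Ioc (0:ℝ) 1, (‖G t‖₊ : ℝ≥0∞) := by
    calc (‖u (x + h) - u x‖₊ : ℝ≥0∞) = ENNReal.ofReal ‖u (x + h) - u x‖ :=
          (ofReal_norm_eq_coe_nnnorm _).symm
      _ ≤ ENNReal.ofReal (‖h‖ * ∫ t in Set.Ioc (0:ℝ) 1, G t) := ENNReal.ofReal_le_ofReal hnormbound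
      _ = ENNReal.ofReal ‖h‖ * ENNReal.ofReal (∫ t in Set.Ioc (0:ℝ) 1, G t) :=
          ENNReal.ofReal_mul (norm_nonneg h)
      _ ≤ (‖h‖₊ : ℝ≥0∞) * ∫⁻ t in Set.Ioc (0:ℝ) 1, (‖G t‖₊ : ℝ≥0∞) := by
          rw [ofReal_norm_eq_coe_nnnorm]
          refine mul_le_mul_right ?_ _
          have heq : (∫ t in Set.Ioc (0:ℝ) 1, G t) = ∫ t in Set.Ioc (0:ℝ) 1, ‖G t‖ :=
            integral_congr_ae (Filter.Eventually.of_forall fun t =>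
              (Real.norm_of_nonneg (norm_nonneg _)).symm)
          rw [heq, ofReal_integral_norm_eq_lintegral_nnnorm hG1]
  -- Cauchy-Schwarz
  have hmeasG' : Measurable fun t => (‖G t‖₊ : ℝ≥0∞) := hmeasG.enorm
  have CS : (∫⁻ t in Set.Ioc (0:ℝ) 1, (‖G t‖₊ : ℝ≥0∞)) ^ 2 ≤
      ∫⁻ t in Set.Ioc (0:ℝ) 1, (‖G t‖₊ : ℝ≥0∞) ^ 2 := by
    have hconj : Real.HolderConjugate 2 2 := ⟨by norm_num, by norm_num, by norm_num⟩
    have hH := ENNReal.lintegral_mul_le_Lp_mul_Lq (volume.restrict (Set.Ioc (0:ℝ) 1)) hconj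
      hmeasG'.aemeasurable aemeasurable_const (g := fun _ => (1 : ℝ≥0∞))
    have h1 : ∫⁻ t in Set.Ioc (0:ℝ) 1,
          (((fun t => (‖G t‖₊ : ℝ≥0∞)) * fun _ => (1:ℝ≥0∞)) : ℝ → ℝ≥0∞) t
        = ∫⁻ t in Set.Ioc (0:ℝ) 1, (‖G t‖₊ : ℝ≥0∞) := by simp
    have h2 : (∫⁻ _t in Set.Ioc (0:ℝ) 1, ((1:ℝ≥0∞)) ^ (2:ℝ)) ^ (1/(2:ℝ)) = 1 := by
      simp [Real.volume_Ioc]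
    have h3 : ∫⁻ t in Set.Ioc (0:ℝ) 1, (‖G t‖₊ : ℝ≥0∞) ^ (2:ℝ)
        = ∫⁻ t in Set.Ioc (0:ℝ) 1, (‖G t‖₊ : ℝ≥0∞) ^ 2 := by
      refine lintegral_congr fun t => ?_
      rw [← ENNReal.rpow_natCast _ 2]; norm_num
    rw [h1, h2, mul_one, h3] at hH
    calc (∫⁻ t in Set.Ioc (0:ℝ) 1, (‖G t‖₊ : ℝ≥0∞)) ^ 2
        ≤ ((∫⁻ t in Set.Ioc (0:ℝ) 1, (‖G t‖₊ : ℝ≥0∞) ^ 2) ^ (1/(2:ℝ))) ^ 2 :=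
          pow_le_pow_left' hH 2
      _ = ∫⁻ t in Set.Ioc (0:ℝ) 1, (‖G t‖₊ : ℝ≥0∞) ^ 2 := by
          rw [← ENNReal.rpow_natCast (_ ^ (1/(2:ℝ))) 2, ← ENNReal.rpow_mul]
          norm_num
  calc (‖u (x + h) - u x‖₊ : ℝ≥0∞) ^ 2
      ≤ ((‖h‖₊ : ℝ≥0∞) * ∫⁻ t in Set.Ioc (0:ℝ) 1, (‖G t‖₊ : ℝ≥0∞)) ^ 2 :=
        pow_le_pow_left' step1 2
    _ = (‖h‖₊ : ℝ≥0∞) ^ 2 * (∫⁻ t in Set.Ioc (0:ℝ) 1, (‖G t‖₊ : ℝ≥0∞)) ^ 2 := mul_pow _ _ _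
    _ ≤ (‖h‖₊ : ℝ≥0∞) ^ 2 * ∫⁻ t in Set.Ioc (0:ℝ) 1, (‖fderiv ℝ u (x + t • h)‖₊ : ℝ≥0∞) ^ 2 := by
        refine mul_le_mul_right (le_trans CS ?_) _
        refine lintegral_mono fun t => ?_
        simp [hG, nnnorm_norm]


lemma enorm_sq_le {L : ℝ} (hL : 0 < L) (h : EuclideanSpace ℝ (Fin d))
    (hB : ∀ i, |h i| ≤ L) : (‖h‖₊ : ℝ≥0∞) ^ 2 ≤ ENNReal.ofReal (d * L ^ 2) := by
  have hnorm : ‖h‖ ^ 2 ≤ d * L ^ 2 := by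
    rw [EuclideanSpace.norm_eq, Real.sq_sqrt (Finset.sum_nonneg fun i _ => sq_nonneg _)]
    calc ∑ i, ‖h i‖ ^ 2 ≤ ∑ _i : Fin d, L ^ 2 := by
          refine Finset.sum_le_sum fun i _ => ?_
          rw [Real.norm_eq_abs]
          nlinarith [hB i, abs_nonneg (h i)]
      _ = d * L ^ 2 := by simp [Finset.sum_const, nsmul_eq_mul]
  calc (‖h‖₊ : ℝ≥0∞) ^ 2 = ENNReal.ofReal (‖h‖ ^ 2) := by
        rw [← ofReal_norm_eq_coe_nnnorm, ← ENNReal.ofReal_pow (norm_nonneg h)]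
    _ ≤ ENNReal.ofReal (d * L ^ 2) := ENNReal.ofReal_le_ofReal hnorm

lemma volume_bcube {L : ℝ} (hL : 0 < L) :
    volume {h : EuclideanSpace ℝ (Fin d) | ∀ i, |h i| ≤ L} = ENNReal.ofReal (2 * L) ^ d := by
  have he : {h : EuclideanSpace ℝ (Fin d) | ∀ i, |h i| ≤ L} =
      (MeasurableEquiv.toLp 2 (Fin d → ℝ)).symm ⁻¹' (Set.univ.pi fun _ => Set.Icc (-L) L) := by
    ext x
    simp only [Set.mem_setOf_eq, Set.mem_preimage, Set.mem_pi, Set.mem_univ, forall_true_left,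
      Set.mem_Icc, MeasurableEquiv.toLp_symm_apply]
    exact forall_congr' fun i => abs_le
  rw [he, (EuclideanSpace.volume_preserving_symm_measurableEquiv_toLp (Fin d)).measure_preimage
    (MeasurableSet.univ_pi fun _ => measurableSet_Icc).nullMeasurableSet, volume_pi_pi]
  simp only [Real.volume_Icc, Finset.prod_const, Finset.card_univ, Fintype.card_fin]
  congr 1
  ring_nf


lemma aux_hFm (g : EuclideanSpace ℝ (Fin d) → ℝ≥0∞) (hgm : Measurable g) :
    Measurable (fun p : EuclideanSpace ℝ (Fin d) × EuclideanSpace ℝ (Fin d) =>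
      ∫⁻ t in Set.Ioc (0:ℝ) 1, g (p.1 + t • p.2)) := by
  have haff : Continuous (fun p : (EuclideanSpace ℝ (Fin d) × EuclideanSpace ℝ (Fin d)) × ℝ =>
      p.1.1 + p.2 • p.1.2) :=
    ((continuous_fst.comp continuous_fst).add
      (continuous_snd.smul (continuous_snd.comp continuous_fst)))
  exact Measurable.lintegral_prod_right' (ν := volume.restrict (Set.Ioc (0:ℝ) 1))
    (f := fun q : (EuclideanSpace ℝ (Fin d) × EuclideanSpace ℝ (Fin d)) × ℝ => g (q.1.1 + q.2 • q.1.2)) (hgm.comp haff.measurable)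

lemma aux_hPsim (g : EuclideanSpace ℝ (Fin d) → ℝ≥0∞) (hgm : Measurable g)
    {Q : Set (EuclideanSpace ℝ (Fin d))} (hQm : MeasurableSet Q) :
    Measurable (Function.uncurry (fun x h : EuclideanSpace ℝ (Fin d) =>
      (Q.indicator (fun _ => (1:ℝ≥0∞)) x) * (Q.indicator (fun _ => (1:ℝ≥0∞)) (x + h)) *
      ((‖h‖₊ : ℝ≥0∞) ^ 2 * ∫⁻ t in Set.Ioc (0:ℝ) 1, g (x + t • h)))) := by
  have hindm : Measurable (Q.indicator (fun _ => (1:ℝ≥0∞))) := measurable_const.indicator hQm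
  exact ((hindm.comp measurable_fst).mul
    (hindm.comp (measurable_fst.add measurable_snd))).mul
    (((measurable_snd.enorm).pow_const 2).mul (aux_hFm g hgm))

lemma aux_hmeas2 (g : EuclideanSpace ℝ (Fin d) → ℝ≥0∞) (hgm : Measurable g)
    {Q : Set (EuclideanSpace ℝ (Fin d))} (hQm : MeasurableSet Q)
    (h : EuclideanSpace ℝ (Fin d)) :
    Measurable (Function.uncurry (fun (x : EuclideanSpace ℝ (Fin d)) (t : ℝ) =>
      (Q.indicator (fun _ => (1:ℝ≥0∞)) x) * (Q.indicator (fun _ => (1:ℝ≥0∞)) (x + h)) *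
        g (x + t • h))) := by
  have hindm : Measurable (Q.indicator (fun _ => (1:ℝ≥0∞))) := measurable_const.indicator hQm
  have haff : Continuous (fun p : EuclideanSpace ℝ (Fin d) × ℝ => p.1 + p.2 • h) :=
    continuous_fst.add (continuous_snd.smul continuous_const)
  exact ((hindm.comp measurable_fst).mul
    (hindm.comp ((measurable_fst.add measurable_const)))).mul (hgm.comp haff.measurable)

lemma cube_double_bound {u : EuclideanSpace ℝ (Fin d) → ℝ} (hu : Differentiable ℝ u)
    {L : ℝ} (hL : 0 < L) (z : Fin d → ℤ) :
    ∫⁻ x in cube L z, ∫⁻ y in cube L z, (‖u x - u y‖₊ : ℝ≥0∞) ^ 2 ≤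
      ENNReal.ofReal (d * L ^ 2) * ENNReal.ofReal (2 * L) ^ d *
        ∫⁻ x in cube L z, (‖fderiv ℝ u x‖₊ : ℝ≥0∞) ^ 2 := by
  classical
  set Q := cube L z with hQ
  have hQm : MeasurableSet Q := cube_measurable L z
  set g : EuclideanSpace ℝ (Fin d) → ℝ≥0∞ := fun w => (‖fderiv ℝ u w‖₊ : ℝ≥0∞) ^ 2 with hg
  have hgm : Measurable g := ((measurable_fderiv ℝ u).enorm).pow_const 2
  have hum : Measurable u := hu.continuous.measurable
  -- the auxiliary kernel
  set Ψ : EuclideanSpace ℝ (Fin d) → EuclideanSpace ℝ (Fin d) → ℝ≥0∞ := fun x h =>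
    (Q.indicator (fun _ => (1:ℝ≥0∞)) x) * (Q.indicator (fun _ => (1:ℝ≥0∞)) (x + h)) *
      ((‖h‖₊ : ℝ≥0∞) ^ 2 * ∫⁻ t in Set.Ioc (0:ℝ) 1, g (x + t • h)) with hΨ
  have hΨm : Measurable (Function.uncurry Ψ) := aux_hPsim g hgm hQm
  -- step 1 : bound the double integral by the kernel integral
  have hind_ne : ∀ (s : Set (EuclideanSpace ℝ (Fin d))) x,
      Set.indicator s (fun _ => (1:ℝ≥0∞)) x ≠ ⊤ := by
    intro s x; by_cases h : x ∈ s <;> simp [h]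
  have step1 : ∫⁻ x in Q, ∫⁻ y in Q, (‖u x - u y‖₊ : ℝ≥0∞) ^ 2 ≤ ∫⁻ x, ∫⁻ h, Ψ x h := by
    have hrw : ∀ x, ∫⁻ y in Q, (‖u x - u y‖₊ : ℝ≥0∞) ^ 2
        = ∫⁻ h, Q.indicator (fun y => (‖u y - u x‖₊ : ℝ≥0∞) ^ 2) (x + h) := by
      intro x
      have hFm' : Measurable (Q.indicator (fun y => (‖u y - u x‖₊ : ℝ≥0∞) ^ 2)) :=
        (((hum.sub measurable_const).enorm).pow_const 2).indicator hQm
      calc ∫⁻ y in Q, (‖u x - u y‖₊ : ℝ≥0∞) ^ 2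
          = ∫⁻ y in Q, (‖u y - u x‖₊ : ℝ≥0∞) ^ 2 :=
            lintegral_congr fun y => by rw [← ofReal_norm_eq_coe_nnnorm, norm_sub_rev, ofReal_norm_eq_coe_nnnorm]
        _ = ∫⁻ y, Q.indicator (fun y => (‖u y - u x‖₊ : ℝ≥0∞) ^ 2) y :=
            (lintegral_indicator hQm _).symm
        _ = ∫⁻ h, Q.indicator (fun y => (‖u y - u x‖₊ : ℝ≥0∞) ^ 2) (h + x) :=
            ((measurePreserving_add_right volume x).lintegral_comp hFm').symm
        _ = ∫⁻ h, Q.indicator (fun y => (‖u y - u x‖₊ : ℝ≥0∞) ^ 2) (x + h) :=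
            lintegral_congr fun h => by rw [add_comm]
    rw [← lintegral_indicator hQm]
    have hpt : ∀ x, Q.indicator (fun x' => ∫⁻ y in Q, (‖u x' - u y‖₊ : ℝ≥0∞) ^ 2) x
        ≤ ∫⁻ h, Ψ x h := by
      intro x
      by_cases hx : x ∈ Q
      · rw [Set.indicator_of_mem hx, hrw x]
        refine lintegral_mono fun h => ?_
        by_cases hxh : x + h ∈ Q
        · rw [Set.indicator_of_mem hxh]
          simp only [hΨ, Set.indicator_of_mem hx, Set.indicator_of_mem hxh, one_mul]
          exact ftc_bound hu x h
        · rw [Set.indicator_of_notMem hxh]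
          exact zero_le
      · rw [Set.indicator_of_notMem hx]
        exact zero_le
    exact lintegral_mono hpt
  have cube_mem_convex : ∀ (x h : EuclideanSpace ℝ (Fin d)) (t : ℝ), 0 ≤ t → t ≤ 1 →
      x ∈ Q → x + h ∈ Q → x + t • h ∈ Q := by
    intro x h t ht0 ht1 hx hxh
    have heq : x + t • h = (1 - t) • x + t • (x + h) := by module
    rw [heq]
    exact cube_convex L z hx hxh (by linarith) ht0 (by ring)
  -- step 2: swap and bound
  have hBm : MeasurableSet {h : EuclideanSpace ℝ (Fin d) | ∀ i, |h i| ≤ L} := by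
    have heq : {h : EuclideanSpace ℝ (Fin d) | ∀ i, |h i| ≤ L} =
        ⋂ i, ((EuclideanSpace.proj i : EuclideanSpace ℝ (Fin d) →L[ℝ] ℝ) ⁻¹' Set.Icc (-L) L) := by
      ext x
      simp [Set.mem_iInter, PiLp.proj_apply, abs_le]
    rw [heq]
    exact MeasurableSet.iInter fun i =>
      ((EuclideanSpace.proj i : EuclideanSpace ℝ (Fin d) →L[ℝ] ℝ).continuous).measurable
        measurableSet_Icc
  have step2 : ∀ h : EuclideanSpace ℝ (Fin d), (∫⁻ x, Ψ x h) ≤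
      Set.indicator {h : EuclideanSpace ℝ (Fin d) | ∀ i, |h i| ≤ L}
        (fun _ => ENNReal.ofReal (d * L ^ 2) * ∫⁻ x in Q, g x) h := by
    intro h
    by_cases hB : h ∈ {h : EuclideanSpace ℝ (Fin d) | ∀ i, |h i| ≤ L}
    · rw [Set.indicator_of_mem hB]
      have hb1 : ∀ x, Ψ x h ≤ ENNReal.ofReal (d * L ^ 2) *
          (Q.indicator (fun _ => (1:ℝ≥0∞)) x * Q.indicator (fun _ => (1:ℝ≥0∞)) (x + h) *
            ∫⁻ t in Set.Ioc (0:ℝ) 1, g (x + t • h)) := by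
        intro x
        simp only [hΨ]
        calc Q.indicator (fun _ => (1:ℝ≥0∞)) x * Q.indicator (fun _ => (1:ℝ≥0∞)) (x + h) *
            ((‖h‖₊ : ℝ≥0∞) ^ 2 * ∫⁻ t in Set.Ioc (0:ℝ) 1, g (x + t • h))
            ≤ Q.indicator (fun _ => (1:ℝ≥0∞)) x * Q.indicator (fun _ => (1:ℝ≥0∞)) (x + h) *
            (ENNReal.ofReal (d * L ^ 2) * ∫⁻ t in Set.Ioc (0:ℝ) 1, g (x + t • h)) := by
              exact mul_le_mul_right (mul_le_mul_left (enorm_sq_le hL h hB) _) _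
          _ = ENNReal.ofReal (d * L ^ 2) *
            (Q.indicator (fun _ => (1:ℝ≥0∞)) x * Q.indicator (fun _ => (1:ℝ≥0∞)) (x + h) *
            ∫⁻ t in Set.Ioc (0:ℝ) 1, g (x + t • h)) := by ring
      calc ∫⁻ x, Ψ x h ≤ ∫⁻ x, ENNReal.ofReal (d * L ^ 2) *
            (Q.indicator (fun _ => (1:ℝ≥0∞)) x * Q.indicator (fun _ => (1:ℝ≥0∞)) (x + h) *
            ∫⁻ t in Set.Ioc (0:ℝ) 1, g (x + t • h)) := lintegral_mono hb1
        _ = ENNReal.ofReal (d * L ^ 2) * ∫⁻ x,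
            (Q.indicator (fun _ => (1:ℝ≥0∞)) x * Q.indicator (fun _ => (1:ℝ≥0∞)) (x + h) *
            ∫⁻ t in Set.Ioc (0:ℝ) 1, g (x + t • h)) :=
            lintegral_const_mul' _ _ ENNReal.ofReal_ne_top
        _ ≤ ENNReal.ofReal (d * L ^ 2) * ∫⁻ x in Q, g x := by
            refine mul_le_mul_right ?_ _
            have hmove : ∀ x : EuclideanSpace ℝ (Fin d),
                Q.indicator (fun _ => (1:ℝ≥0∞)) x * Q.indicator (fun _ => (1:ℝ≥0∞)) (x + h) *
                  ∫⁻ t in Set.Ioc (0:ℝ) 1, g (x + t • h)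
                = ∫⁻ t in Set.Ioc (0:ℝ) 1, (Q.indicator (fun _ => (1:ℝ≥0∞)) x *
                    Q.indicator (fun _ => (1:ℝ≥0∞)) (x + h) * g (x + t • h)) :=
              fun x => (lintegral_const_mul' _ _
                (ENNReal.mul_ne_top (hind_ne _ _) (hind_ne _ _))).symm
            calc ∫⁻ x, (Q.indicator (fun _ => (1:ℝ≥0∞)) x *
                  Q.indicator (fun _ => (1:ℝ≥0∞)) (x + h) *
                  ∫⁻ t in Set.Ioc (0:ℝ) 1, g (x + t • h))
                = ∫⁻ x, ∫⁻ t in Set.Ioc (0:ℝ) 1, (Q.indicator (fun _ => (1:ℝ≥0∞)) x *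
                    Q.indicator (fun _ => (1:ℝ≥0∞)) (x + h) * g (x + t • h)) :=
                  lintegral_congr hmove
              _ = ∫⁻ t in Set.Ioc (0:ℝ) 1, ∫⁻ x, (Q.indicator (fun _ => (1:ℝ≥0∞)) x *
                    Q.indicator (fun _ => (1:ℝ≥0∞)) (x + h) * g (x + t • h)) :=
                  lintegral_lintegral_swap (aux_hmeas2 g hgm hQm h).aemeasurable
              _ ≤ ∫⁻ _t in Set.Ioc (0:ℝ) 1, ∫⁻ x in Q, g x := by
                  refine lintegral_mono_ae ?_
                  filter_upwards [ae_restrict_mem measurableSet_Ioc] with t ht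
                  calc ∫⁻ x, (Q.indicator (fun _ => (1:ℝ≥0∞)) x *
                        Q.indicator (fun _ => (1:ℝ≥0∞)) (x + h) * g (x + t • h))
                      ≤ ∫⁻ x, Q.indicator (fun _ => (1:ℝ≥0∞)) (x + t • h) * g (x + t • h) := by
                        refine lintegral_mono fun x => ?_
                        by_cases hx : x ∈ Q
                        · by_cases hxh : x + h ∈ Q
                          · have hmem := cube_mem_convex x h t (le_of_lt ht.1) ht.2 hx hxh
                            simp [Set.indicator_of_mem, hx, hxh, hmem]
                          · simp [Set.indicator_of_notMem hxh]
                        · simp [Set.indicator_of_notMem hx]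
                    _ = ∫⁻ x in Q, g x := by
                        have hcomp : Measurable (fun w : EuclideanSpace ℝ (Fin d) =>
                            Q.indicator (fun _ => (1:ℝ≥0∞)) w * g w) :=
                          (measurable_const.indicator hQm).mul hgm
                        rw [(measurePreserving_add_right volume (t • h)).lintegral_comp hcomp]
                        rw [← lintegral_indicator hQm]
                        refine lintegral_congr fun w => ?_
                        by_cases hw : w ∈ Q <;>
                          simp [Set.indicator_of_mem, Set.indicator_of_notMem, hw]
              _ = ∫⁻ x in Q, g x := by
                  rw [lintegral_const, Measure.restrict_apply_univ, Real.volume_Ioc]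
                  norm_num
    · rw [Set.indicator_of_notMem hB]
      have hzero : ∀ x, Ψ x h = 0 := by
        intro x
        simp only [Set.mem_setOf_eq, not_forall, not_le] at hB
        obtain ⟨i, hi⟩ := hB
        by_cases hx : x ∈ Q
        · by_cases hxh : x + h ∈ Q
          · exfalso
            have h1 := hx i
            have h2 := hxh i
            simp only [Set.mem_Ico] at h1 h2
            have hadd : (x + h) i = x i + h i := rfl
            rw [hadd] at h2
            have : |h i| < L := abs_lt.mpr ⟨by linarith, by linarith⟩
            linarith
          · simp [hΨ, Set.indicator_of_notMem hxh]
        · simp [hΨ, Set.indicator_of_notMem hx]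
      rw [lintegral_congr hzero]
      simp
  calc ∫⁻ x in Q, ∫⁻ y in Q, (‖u x - u y‖₊ : ℝ≥0∞) ^ 2 ≤ ∫⁻ x, ∫⁻ h, Ψ x h := step1
    _ = ∫⁻ h, ∫⁻ x, Ψ x h := lintegral_lintegral_swap hΨm.aemeasurable
    _ ≤ ∫⁻ h, Set.indicator {h : EuclideanSpace ℝ (Fin d) | ∀ i, |h i| ≤ L}
        (fun _ => ENNReal.ofReal (d * L ^ 2) * ∫⁻ x in Q, g x) h := lintegral_mono step2
    _ = ENNReal.ofReal (d * L ^ 2) * ENNReal.ofReal (2 * L) ^ d * ∫⁻ x in Q, g x := by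
        rw [lintegral_indicator hBm, lintegral_const, Measure.restrict_apply_univ,
          volume_bcube hL]
        ring



lemma variance_bound {Q : Set (EuclideanSpace ℝ (Fin d))} (hQm : MeasurableSet Q)
    (hQfin : volume Q ≠ ⊤) {u : EuclideanSpace ℝ (Fin d) → ℝ}
    (hu1 : IntegrableOn u Q volume) (hu2 : IntegrableOn (fun x => u x ^ 2) Q volume) :
    (volume Q).toReal * ∫ x in Q, u x ^ 2 ≤
      (∫ x in Q, |u x|) ^ 2 + ∫ x in Q, ∫ y in Q, (u x - u y) ^ 2 := by
  have hfinite : IsFiniteMeasure (volume.restrict Q) := by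
    constructor
    rw [Measure.restrict_apply_univ]
    exact lt_top_iff_ne_top.mpr hQfin
  set m := (volume Q).toReal with hm
  set I1 := ∫ x in Q, u x with hI1
  set I2 := ∫ x in Q, u x ^ 2 with hI2
  have hinner : ∀ x : EuclideanSpace ℝ (Fin d),
      ∫ y in Q, (u x - u y) ^ 2 = m * u x ^ 2 - 2 * u x * I1 + I2 := by
    intro x
    have hring : (fun y => (u x - u y) ^ 2) =
        fun y => (u x ^ 2 - 2 * u x * u y) + u y ^ 2 := by
      funext y; ring
    have hf1 : Integrable (fun y => u x ^ 2 - 2 * u x * u y) (volume.restrict Q) :=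
      (integrable_const _).sub (hu1.const_mul _)
    rw [hring, integral_add hf1 hu2,
      integral_sub (integrable_const _) (hu1.const_mul _), integral_const,
      integral_const_mul]
    simp only [smul_eq_mul]
    rw [measureReal_restrict_apply_univ, Measure.real]
    try ring
  have houter : ∫ x in Q, ∫ y in Q, (u x - u y) ^ 2 = 2 * m * I2 - 2 * I1 ^ 2 := by
    have : (fun x => ∫ y in Q, (u x - u y) ^ 2) =
        fun x => (m * u x ^ 2 - 2 * (u x * I1)) + I2 := by
      funext x; rw [hinner x]; ring
    have hf2 : Integrable (fun x => m * u x ^ 2 - 2 * (u x * I1)) (volume.restrict Q) :=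
      (hu2.const_mul m).sub ((hu1.mul_const I1).const_mul 2)
    have hf3 : Integrable (fun x => 2 * (u x * I1)) (volume.restrict Q) :=
      (hu1.mul_const I1).const_mul 2
    rw [this, integral_add hf2 (integrable_const _),
      integral_sub (hu2.const_mul m) hf3, integral_const, integral_const_mul,
      integral_const_mul, integral_mul_const]
    simp only [smul_eq_mul]
    rw [measureReal_restrict_apply_univ, Measure.real]
    try ring
  have hI1abs : I1 ^ 2 ≤ (∫ x in Q, |u x|) ^ 2 := by
    have h1 : |I1| ≤ ∫ x in Q, |u x| := by
      have := norm_integral_le_integral_norm (f := u) (μ := volume.restrict Q)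
      simpa [Real.norm_eq_abs] using this
    calc I1 ^ 2 = |I1| ^ 2 := (sq_abs _).symm
      _ ≤ (∫ x in Q, |u x|) ^ 2 := by
          have := abs_nonneg I1
          nlinarith
  have hDnonneg : 0 ≤ ∫ x in Q, ∫ y in Q, (u x - u y) ^ 2 :=
    integral_nonneg fun x => integral_nonneg fun y => sq_nonneg _
  nlinarith [houter, hI1abs, hDnonneg]


lemma hpt_ofReal_sq (r : ℝ) : ENNReal.ofReal (r ^ 2) = (‖r‖₊ : ℝ≥0∞) ^ 2 := by
  rw [← ofReal_norm_eq_coe_nnnorm, ← ENNReal.ofReal_pow (norm_nonneg _)]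
  congr 1
  rw [Real.norm_eq_abs, sq_abs]

lemma cube_enn_bound {u : EuclideanSpace ℝ (Fin d) → ℝ} (hu : Differentiable ℝ u)
    (hu1 : Integrable u volume) (hu2 : MemLp u 2 volume) {L : ℝ} (hL : 0 < L)
    (z : Fin d → ℤ) :
    volume (cube L z) * ∫⁻ x in cube L z, (‖u x‖₊ : ℝ≥0∞) ^ 2 ≤
      (∫⁻ x in cube L z, (‖u x‖₊ : ℝ≥0∞)) ^ 2 +
        ENNReal.ofReal (d * L ^ 2) * ENNReal.ofReal (2 * L) ^ d *
          ∫⁻ x in cube L z, (‖fderiv ℝ u x‖₊ : ℝ≥0∞) ^ 2 := by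
  set Q := cube L z with hQdef
  have hQm : MeasurableSet Q := cube_measurable L z
  have hQfin : volume Q ≠ ⊤ := by
    rw [cube_volume L hL z]
    exact ENNReal.pow_ne_top ENNReal.ofReal_ne_top
  have hu1Q : IntegrableOn u Q volume := hu1.integrableOn
  have hu2Q : IntegrableOn (fun x => u x ^ 2) Q volume := hu2.integrable_sq.integrableOn
  have hinner_int : ∀ x, IntegrableOn (fun y => (u x - u y) ^ 2) Q volume := by
    intro x
    have hr : (fun y => (u x - u y) ^ 2) =
        fun y => (u x ^ 2 - 2 * u x * u y) + u y ^ 2 := by funext y; ring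
    rw [hr]
    have hfin : IsFiniteMeasure (volume.restrict Q) := by
      constructor
      rw [Measure.restrict_apply_univ]
      exact lt_top_iff_ne_top.mpr hQfin
    exact ((integrable_const _).sub (hu1Q.const_mul _)).add hu2Q
  have e1 : ∫⁻ x in Q, (‖u x‖₊ : ℝ≥0∞) ^ 2 = ENNReal.ofReal (∫ x in Q, u x ^ 2) := by
    rw [ofReal_integral_eq_lintegral_ofReal hu2Q
      (Filter.Eventually.of_forall fun x => sq_nonneg _)]
    exact lintegral_congr fun x => (hpt_ofReal_sq (u x)).symm
  have e2 : ∫⁻ x in Q, (‖u x‖₊ : ℝ≥0∞) = ENNReal.ofReal (∫ x in Q, |u x|) := by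
    have hr : (∫ x in Q, |u x|) = ∫ x in Q, ‖u x‖ := by
      refine integral_congr_ae (Filter.Eventually.of_forall fun x => (Real.norm_eq_abs _).symm)
    rw [hr, ofReal_integral_norm_eq_lintegral_nnnorm hu1Q]
  have hDinner : ∀ x, ENNReal.ofReal (∫ y in Q, (u x - u y) ^ 2)
      = ∫⁻ y in Q, (‖u x - u y‖₊ : ℝ≥0∞) ^ 2 := by
    intro x
    rw [ofReal_integral_eq_lintegral_ofReal (hinner_int x)
      (Filter.Eventually.of_forall fun y => sq_nonneg _)]
    exact lintegral_congr fun y => hpt_ofReal_sq (u x - u y)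
  have hDmeas : AEStronglyMeasurable (fun x => ∫ y in Q, (u x - u y) ^ 2)
      (volume.restrict Q) := by
    have hc : Continuous (fun p : EuclideanSpace ℝ (Fin d) × EuclideanSpace ℝ (Fin d) =>
        (u p.1 - u p.2) ^ 2) :=
      ((hu.continuous.comp continuous_fst).sub (hu.continuous.comp continuous_snd)).pow 2
    exact hc.aestronglyMeasurable.integral_prod_right'
  have hDouter : ENNReal.ofReal (∫ x in Q, ∫ y in Q, (u x - u y) ^ 2)
      ≤ ∫⁻ x in Q, ∫⁻ y in Q, (‖u x - u y‖₊ : ℝ≥0∞) ^ 2 := by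
    have heq : ∫ x in Q, ∫ y in Q, (u x - u y) ^ 2 =
        (∫⁻ x in Q, ∫⁻ y in Q, (‖u x - u y‖₊ : ℝ≥0∞) ^ 2).toReal := by
      rw [integral_eq_lintegral_of_nonneg_ae
        (Filter.Eventually.of_forall fun x => integral_nonneg fun y => sq_nonneg _) hDmeas]
      congr 1
      exact lintegral_congr fun x => hDinner x
    rw [heq]
    exact ENNReal.ofReal_toReal_le
  have hvar := variance_bound hQm hQfin hu1Q hu2Q
  calc volume Q * ∫⁻ x in Q, (‖u x‖₊ : ℝ≥0∞) ^ 2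
      = ENNReal.ofReal ((volume Q).toReal * ∫ x in Q, u x ^ 2) := by
        rw [ENNReal.ofReal_mul ENNReal.toReal_nonneg, ENNReal.ofReal_toReal hQfin, e1]
    _ ≤ ENNReal.ofReal ((∫ x in Q, |u x|) ^ 2 + ∫ x in Q, ∫ y in Q, (u x - u y) ^ 2) :=
        ENNReal.ofReal_le_ofReal hvar
    _ ≤ ENNReal.ofReal ((∫ x in Q, |u x|) ^ 2) +
        ENNReal.ofReal (∫ x in Q, ∫ y in Q, (u x - u y) ^ 2) := ENNReal.ofReal_add_le
    _ ≤ (∫⁻ x in Q, (‖u x‖₊ : ℝ≥0∞)) ^ 2 +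
        ∫⁻ x in Q, ∫⁻ y in Q, (‖u x - u y‖₊ : ℝ≥0∞) ^ 2 := by
        refine add_le_add ?_ hDouter
        rw [e2, ← ENNReal.ofReal_pow (integral_nonneg fun x => abs_nonneg _)]
    _ ≤ (∫⁻ x in Q, (‖u x‖₊ : ℝ≥0∞)) ^ 2 +
        ENNReal.ofReal (d * L ^ 2) * ENNReal.ofReal (2 * L) ^ d *
          ∫⁻ x in Q, (‖fderiv ℝ u x‖₊ : ℝ≥0∞) ^ 2 :=
        add_le_add_right (cube_double_bound hu hL z) _

lemma global_bound {u : EuclideanSpace ℝ (Fin d) → ℝ} (hu : Differentiable ℝ u)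
    (hu1 : Integrable u volume) (hu2 : MemLp u 2 volume) {L : ℝ} (hL : 0 < L) :
    ∫⁻ x, (‖u x‖₊ : ℝ≥0∞) ^ 2 ≤
      (∫⁻ x, (‖u x‖₊ : ℝ≥0∞)) ^ 2 / ENNReal.ofReal L ^ d +
        ENNReal.ofReal (d * L ^ 2) * 2 ^ d * ∫⁻ x, (‖fderiv ℝ u x‖₊ : ℝ≥0∞) ^ 2 := by
  set V := ENNReal.ofReal L ^ d with hV
  have hV0 : V ≠ 0 := pow_ne_zero _ (ENNReal.ofReal_pos.mpr hL).ne'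
  have hVtop : V ≠ ⊤ := ENNReal.pow_ne_top ENNReal.ofReal_ne_top
  set K := ENNReal.ofReal (d * L ^ 2) * 2 ^ d with hK
  have percube : ∀ z : Fin d → ℤ, ∫⁻ x in cube L z, (‖u x‖₊ : ℝ≥0∞) ^ 2 ≤
      (∫⁻ x in cube L z, (‖u x‖₊ : ℝ≥0∞)) ^ 2 / V +
        K * ∫⁻ x in cube L z, (‖fderiv ℝ u x‖₊ : ℝ≥0∞) ^ 2 := by
    intro z
    have h := cube_enn_bound hu hu1 hu2 hL z
    rw [cube_volume L hL z, ← hV] at h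
    have hcoef : ENNReal.ofReal (d * L ^ 2) * ENNReal.ofReal (2 * L) ^ d = K * V := by
      have h2L : ENNReal.ofReal (2 * L) = 2 * ENNReal.ofReal L := by
        rw [ENNReal.ofReal_mul (by norm_num : (0:ℝ) ≤ 2)]
        norm_num
      rw [hK, hV, h2L, mul_pow]
      ring
    rw [hcoef] at h
    calc ∫⁻ x in cube L z, (‖u x‖₊ : ℝ≥0∞) ^ 2
        = V * (∫⁻ x in cube L z, (‖u x‖₊ : ℝ≥0∞) ^ 2) / V := by
          rw [mul_comm, mul_div_assoc, ENNReal.div_self hV0 hVtop, mul_one]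
      _ ≤ ((∫⁻ x in cube L z, (‖u x‖₊ : ℝ≥0∞)) ^ 2 +
            K * V * ∫⁻ x in cube L z, (‖fderiv ℝ u x‖₊ : ℝ≥0∞) ^ 2) / V := by
          exact ENNReal.div_le_div_right h V
      _ = (∫⁻ x in cube L z, (‖u x‖₊ : ℝ≥0∞)) ^ 2 / V +
            K * V * (∫⁻ x in cube L z, (‖fderiv ℝ u x‖₊ : ℝ≥0∞) ^ 2) / V := by
          rw [ENNReal.add_div]
      _ = (∫⁻ x in cube L z, (‖u x‖₊ : ℝ≥0∞)) ^ 2 / V +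
            K * ∫⁻ x in cube L z, (‖fderiv ℝ u x‖₊ : ℝ≥0∞) ^ 2 := by
          congr 1
          rw [show K * V * (∫⁻ x in cube L z, (‖fderiv ℝ u x‖₊ : ℝ≥0∞) ^ 2) =
            (K * ∫⁻ x in cube L z, (‖fderiv ℝ u x‖₊ : ℝ≥0∞) ^ 2) * V by ring]
          rw [mul_div_assoc, ENNReal.div_self hV0 hVtop, mul_one]
  -- sum over cubes
  have hsplit : ∀ F : EuclideanSpace ℝ (Fin d) → ℝ≥0∞,
      ∫⁻ x, F x = ∑' z : Fin d → ℤ, ∫⁻ x in cube L z, F x := by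
    intro F
    rw [← setLIntegral_univ F, ← cube_iUnion L hL,
      lintegral_iUnion (cube_measurable L) (cube_pairwise_disjoint L hL)]
  rw [hsplit (fun x => (‖u x‖₊ : ℝ≥0∞) ^ 2)]
  calc ∑' z : Fin d → ℤ, ∫⁻ x in cube L z, (‖u x‖₊ : ℝ≥0∞) ^ 2
      ≤ ∑' z : Fin d → ℤ, ((∫⁻ x in cube L z, (‖u x‖₊ : ℝ≥0∞)) ^ 2 / V +
          K * ∫⁻ x in cube L z, (‖fderiv ℝ u x‖₊ : ℝ≥0∞) ^ 2) :=
        ENNReal.tsum_le_tsum percube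
    _ = (∑' z : Fin d → ℤ, (∫⁻ x in cube L z, (‖u x‖₊ : ℝ≥0∞)) ^ 2) / V +
        K * ∑' z : Fin d → ℤ, ∫⁻ x in cube L z, (‖fderiv ℝ u x‖₊ : ℝ≥0∞) ^ 2 := by
        rw [ENNReal.tsum_add]
        congr 1
        · simp only [div_eq_mul_inv]
          rw [ENNReal.tsum_mul_right]
        · rw [ENNReal.tsum_mul_left]
    _ ≤ (∫⁻ x, (‖u x‖₊ : ℝ≥0∞)) ^ 2 / V +
        K * ∫⁻ x, (‖fderiv ℝ u x‖₊ : ℝ≥0∞) ^ 2 := by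
        rw [hsplit (fun x => (‖fderiv ℝ u x‖₊ : ℝ≥0∞) ^ 2)]
        refine add_le_add ?_ le_rfl
        refine ENNReal.div_le_div_right ?_ V
        rw [hsplit (fun x => (‖u x‖₊ : ℝ≥0∞))]
        set S := ∑' z : Fin d → ℤ, ∫⁻ x in cube L z, (‖u x‖₊ : ℝ≥0∞) with hS
        calc ∑' z : Fin d → ℤ, (∫⁻ x in cube L z, (‖u x‖₊ : ℝ≥0∞)) ^ 2
            ≤ ∑' z : Fin d → ℤ, (∫⁻ x in cube L z, (‖u x‖₊ : ℝ≥0∞)) * S := by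
              refine ENNReal.tsum_le_tsum fun z => ?_
              rw [sq]
              exact mul_le_mul_right (ENNReal.le_tsum z) _
          _ = S * S := by rw [ENNReal.tsum_mul_right]
          _ = S ^ 2 := (sq S).symm


lemma optimize' (d : ℕ) (hd : 1 ≤ d) (K : ℝ) (hK : 0 < K) (a m b2 : ℝ)
    (ha : 0 ≤ a) (hm : 0 ≤ m) (hb2 : 0 ≤ b2)
    (H : ∀ L : ℝ, 0 < L → a ≤ m ^ 2 / L ^ d + K * L ^ 2 * b2) :
    a ^ ((d + 2 : ℝ) / (2 * d)) ≤
      (1 + K) ^ ((d + 2 : ℝ) / (2 * d)) * b2 ^ ((1:ℝ)/2) * m ^ ((2:ℝ)/d) := by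
  have hD0 : (0:ℝ) < d := by exact_mod_cast hd
  set D : ℝ := (d : ℝ) with hDdef
  have hD2 : (0:ℝ) < D + 2 := by linarith
  set p : ℝ := (D + 2) / (2 * D) with hp
  have hppos : 0 < p := by positivity
  rcases eq_or_lt_of_le ha with rfl | hapos
  · rw [Real.zero_rpow hppos.ne']
    positivity
  -- a > 0; show m > 0
  have hmpos : 0 < m := by
    rcases eq_or_lt_of_le hm with rfl | h
    · exfalso
      rcases eq_or_lt_of_le hb2 with rfl | hb2pos
      · have := H 1 one_pos
        simp at this
        linarith
      · set L := Real.sqrt (a / (2 * K * b2)) with hLdef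
        have hLpos : 0 < L := Real.sqrt_pos.mpr (by positivity)
        have hLsq : L ^ 2 = a / (2 * K * b2) := Real.sq_sqrt (by positivity)
        have := H L hLpos
        rw [hLsq] at this
        have hKL : K * (a / (2 * K * b2)) * b2 = a / 2 := by
          field_simp
        rw [hKL] at this
        have : a ≤ a / 2 := by
          simpa [zero_pow, ne_eq] using this
        linarith
    · exact h
  -- show b2 > 0
  have hb2pos : 0 < b2 := by
    rcases eq_or_lt_of_le hb2 with rfl | h
    · exfalso
      set L := (2 * m ^ 2 / a) ^ ((1:ℝ)/d) with hLdef
      have hbase : 0 < 2 * m ^ 2 / a := by positivity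
      have hLpos : 0 < L := Real.rpow_pos_of_pos hbase _
      have hLd : L ^ d = 2 * m ^ 2 / a := by
        rw [hLdef, ← Real.rpow_natCast ((2 * m ^ 2 / a) ^ ((1:ℝ)/d)) d,
          ← Real.rpow_mul hbase.le]
        rw [show (1:ℝ)/d * d = 1 by field_simp]
        exact Real.rpow_one _
      have := H L hLpos
      rw [hLd] at this
      have heq : m ^ 2 / (2 * m ^ 2 / a) = a / 2 := by
        field_simp
      rw [heq] at this
      simp at this
      linarith
    · exact h
  -- main case
  have hm2pos : (0:ℝ) < m ^ 2 := by positivity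
  set q : ℝ := m ^ 2 / b2 with hq
  have hqpos : 0 < q := by positivity
  set L : ℝ := q ^ ((1:ℝ)/(D+2)) with hLdef
  have hLpos : 0 < L := Real.rpow_pos_of_pos hqpos _
  have hLd : (L:ℝ) ^ d = q ^ (D/(D+2)) := by
    rw [hLdef, ← Real.rpow_natCast (q ^ ((1:ℝ)/(D+2))) d, ← Real.rpow_mul hqpos.le]
    congr 1
    field_simp
    rfl
  have hL2 : L ^ 2 = q ^ ((2:ℝ)/(D+2)) := by
    rw [hLdef, ← Real.rpow_natCast (q ^ ((1:ℝ)/(D+2))) 2, ← Real.rpow_mul hqpos.le]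
    congr 1
    push_cast
    ring
  have hLd0 : (0:ℝ) < L ^ d := by positivity
  have hcomb : q ^ ((2:ℝ)/(D+2)) * q ^ (D/(D+2)) = q := by
    rw [← Real.rpow_add hqpos]
    rw [show (2:ℝ)/(D+2) + D/(D+2) = 1 by field_simp; try ring]
    exact Real.rpow_one q
  have hqb : q * b2 = m ^ 2 := by
    rw [hq]; field_simp
  have h1 : L ^ 2 * b2 * L ^ d = m ^ 2 := by
    rw [hL2, hLd]
    calc q ^ ((2:ℝ)/(D+2)) * b2 * q ^ (D/(D+2))
        = (q ^ ((2:ℝ)/(D+2)) * q ^ (D/(D+2))) * b2 := by ring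
      _ = q * b2 := by rw [hcomb]
      _ = m ^ 2 := hqb
  have hXeq : m ^ 2 / L ^ d = L ^ 2 * b2 := by
    rw [← h1]
    exact mul_div_cancel_right₀ _ hLd0.ne'
  set X : ℝ := m ^ 2 / L ^ d with hXdef
  have hkey : a ≤ (1 + K) * X := by
    have hH := H L hLpos
    have : K * L ^ 2 * b2 = K * X := by
      rw [hXeq]; ring
    rw [this] at hH
    linarith
  have hXpos : 0 < X := by
    rw [hXdef]; positivity
  -- compute X in rpow form
  have hXval : X = m ^ ((4:ℝ)/(D+2)) * b2 ^ (D/(D+2)) := by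
    rw [hXdef, hLd]
    have hqs : q ^ (D/(D+2)) = (m ^ 2) ^ (D/(D+2)) / b2 ^ (D/(D+2)) := by
      rw [hq, Real.div_rpow (by positivity) hb2pos.le]
    rw [hqs, div_div_eq_mul_div, div_eq_iff (by positivity)]
    calc m ^ 2 * b2 ^ (D/(D+2))
        = ((m ^ 2) ^ ((2:ℝ)/(D+2)) * (m ^ 2) ^ (D/(D+2))) * b2 ^ (D/(D+2)) := by
          rw [← Real.rpow_add hm2pos,
            show (2:ℝ)/(D+2) + D/(D+2) = 1 by field_simp; try ring, Real.rpow_one]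
      _ = (m ^ 2) ^ ((2:ℝ)/(D+2)) * b2 ^ (D/(D+2)) * (m ^ 2) ^ (D/(D+2)) := by ring
      _ = m ^ ((4:ℝ)/(D+2)) * b2 ^ (D/(D+2)) * (m ^ 2) ^ (D/(D+2)) := by
          rw [← Real.rpow_natCast m 2, ← Real.rpow_mul hmpos.le]
          refine congrArg (· * (m ^ 2) ^ (D/(D+2))) ?_
          refine congrArg (· * b2 ^ (D/(D+2))) ?_
          congr 1
          ring
  calc a ^ p ≤ ((1 + K) * X) ^ p := Real.rpow_le_rpow ha hkey hppos.le
    _ = (1 + K) ^ p * X ^ p := Real.mul_rpow (by linarith) hXpos.le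
    _ = (1 + K) ^ p * b2 ^ ((1:ℝ)/2) * m ^ ((2:ℝ)/D) := by
        rw [hXval, Real.mul_rpow (by positivity) (by positivity),
          ← Real.rpow_mul hmpos.le, ← Real.rpow_mul hb2pos.le]
        rw [show (4:ℝ)/(D+2) * p = 2/D by rw [hp]; field_simp; ring,
          show D/(D+2) * p = 1/2 by rw [hp]; field_simp]
        ring


end NashProofAux

open NashProofAux in
/-- Nash's inequality on ℝ^d. -/
theorem nash_inequality (d : ℕ) (hd : 1 ≤ d) :
    ∃ c : ℝ, 0 < c ∧ ∀ u : EuclideanSpace ℝ (Fin d) → ℝ,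
      Integrable u volume → MemLp u 2 volume → Differentiable ℝ u →
      MemLp (fun x => ‖fderiv ℝ u x‖) 2 volume →
      (eLpNorm u 2 volume).toReal ^ ((1 : ℝ) + 2 / d) ≤
        c * (eLpNorm (fun x => ‖fderiv ℝ u x‖) 2 volume).toReal *
          (eLpNorm u 1 volume).toReal ^ ((2 : ℝ) / d) := by
  have hd0 : (0:ℝ) < d := by exact_mod_cast hd
  refine ⟨(1 + (d:ℝ) * 2 ^ d) ^ ((d + 2 : ℝ) / (2 * d)), by positivity, ?_⟩
  intro u hu1 hu2 hu hgrad
  set a : ℝ := ∫ x, u x ^ 2 with ha_def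
  set mr : ℝ := ∫ x, |u x| with hmr_def
  set b2 : ℝ := ∫ x, ‖fderiv ℝ u x‖ ^ 2 with hb2_def
  have ha : 0 ≤ a := integral_nonneg fun x => sq_nonneg _
  have hm : 0 ≤ mr := integral_nonneg fun x => abs_nonneg _
  have hb2 : 0 ≤ b2 := integral_nonneg fun x => sq_nonneg _
  -- identify the lintegrals
  have e1g : ∫⁻ x, (‖u x‖₊ : ℝ≥0∞) ^ 2 = ENNReal.ofReal a := by
    rw [ha_def, ofReal_integral_eq_lintegral_ofReal hu2.integrable_sq
      (Filter.Eventually.of_forall fun x => sq_nonneg _)]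
    exact lintegral_congr fun x => (hpt_ofReal_sq (u x)).symm
  have e2g : ∫⁻ x, (‖u x‖₊ : ℝ≥0∞) = ENNReal.ofReal mr := by
    have hr : mr = ∫ x, ‖u x‖ :=
      integral_congr_ae (Filter.Eventually.of_forall fun x => (Real.norm_eq_abs _).symm)
    rw [hr, ofReal_integral_norm_eq_lintegral_nnnorm hu1]
  have e3g : ∫⁻ x, (‖fderiv ℝ u x‖₊ : ℝ≥0∞) ^ 2 = ENNReal.ofReal b2 := by
    rw [hb2_def, ofReal_integral_eq_lintegral_ofReal hgrad.integrable_sq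
      (Filter.Eventually.of_forall fun x => sq_nonneg _)]
    refine lintegral_congr fun x => ?_
    rw [hpt_ofReal_sq]
    simp [nnnorm_norm]
  -- real inequality for every L > 0
  have H : ∀ L : ℝ, 0 < L → a ≤ mr ^ 2 / L ^ d + ((d:ℝ) * 2 ^ d) * L ^ 2 * b2 := by
    intro L hL
    have h := global_bound hu hu1 hu2 hL
    rw [e1g, e2g, e3g] at h
    have hV0 : (ENNReal.ofReal L ^ d) ≠ 0 := pow_ne_zero _ (ENNReal.ofReal_pos.mpr hL).ne'
    have hpart1 : (ENNReal.ofReal mr) ^ 2 / ENNReal.ofReal L ^ d ≠ ⊤ := by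
      refine (ENNReal.div_lt_top ?_ hV0).ne
      exact ENNReal.pow_ne_top ENNReal.ofReal_ne_top
    have hpart2 : ENNReal.ofReal ((d:ℝ) * L ^ 2) * 2 ^ d * ENNReal.ofReal b2 ≠ ⊤ := by
      refine ENNReal.mul_ne_top (ENNReal.mul_ne_top ENNReal.ofReal_ne_top ?_)
        ENNReal.ofReal_ne_top
      exact ENNReal.pow_ne_top (by simp)
    have := ENNReal.toReal_mono (by
      rw [ENNReal.add_ne_top]; exact ⟨hpart1, hpart2⟩) h
    rw [ENNReal.toReal_ofReal ha] at this
    rw [ENNReal.toReal_add hpart1 hpart2] at this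
    rw [ENNReal.toReal_div, ENNReal.toReal_pow, ENNReal.toReal_pow,
      ENNReal.toReal_ofReal hm, ENNReal.toReal_ofReal hL.le] at this
    rw [ENNReal.toReal_mul, ENNReal.toReal_mul, ENNReal.toReal_ofReal (by positivity),
      ENNReal.toReal_ofReal hb2, ENNReal.toReal_pow] at this
    calc a ≤ mr ^ 2 / L ^ d + (d:ℝ) * L ^ 2 * ((2:ℝ≥0∞)).toReal ^ d * b2 := this
      _ = mr ^ 2 / L ^ d + ((d:ℝ) * 2 ^ d) * L ^ 2 * b2 := by
          rw [ENNReal.toReal_ofNat]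
          ring
  have hKpos : (0:ℝ) < (d:ℝ) * 2 ^ d := by positivity
  have hopt := optimize' d hd ((d:ℝ) * 2 ^ d) hKpos a mr b2 ha hm hb2 H
  -- identify the eLpNorms
  have hL2norm : (eLpNorm u 2 volume).toReal = a ^ ((1:ℝ)/2) := by
    rw [eLpNorm_eq_lintegral_rpow_enorm_toReal (by norm_num) (by norm_num)]
    have : ∫⁻ x, (‖u x‖₊ : ℝ≥0∞) ^ ((2:ℝ≥0∞)).toReal = ENNReal.ofReal a := by
      rw [← e1g]
      refine lintegral_congr fun x => ?_
      rw [ENNReal.toReal_ofNat, ← ENNReal.rpow_natCast _ 2]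
      norm_num
    simp only [enorm_eq_nnnorm]
    rw [this, ENNReal.toReal_ofNat, ← ENNReal.toReal_rpow, ENNReal.toReal_ofReal ha]
    try norm_num
  have hGnorm : (eLpNorm (fun x => ‖fderiv ℝ u x‖) 2 volume).toReal = b2 ^ ((1:ℝ)/2) := by
    rw [eLpNorm_eq_lintegral_rpow_enorm_toReal (by norm_num) (by norm_num)]
    have : ∫⁻ x, (‖(fun x => ‖fderiv ℝ u x‖) x‖₊ : ℝ≥0∞) ^ ((2:ℝ≥0∞)).toReal
        = ENNReal.ofReal b2 := by
      rw [← e3g]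
      refine lintegral_congr fun x => ?_
      rw [ENNReal.toReal_ofNat, ← ENNReal.rpow_natCast _ 2]
      simp [nnnorm_norm]
    simp only [enorm_eq_nnnorm]
    erw [this, ENNReal.toReal_ofNat, ← ENNReal.toReal_rpow, ENNReal.toReal_ofReal hb2]
    try norm_num
  have hL1norm : (eLpNorm u 1 volume).toReal = mr := by
    rw [eLpNorm_one_eq_lintegral_enorm]
    simp only [enorm_eq_nnnorm]
    rw [e2g, ENNReal.toReal_ofReal hm]
  rw [hL2norm, hGnorm, hL1norm]
  calc (a ^ ((1:ℝ)/2)) ^ ((1:ℝ) + 2 / d)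
      = a ^ ((d + 2 : ℝ) / (2 * d)) := by
        rw [← Real.rpow_mul ha]
        congr 1
        field_simp
        try ring
    _ ≤ (1 + (d:ℝ) * 2 ^ d) ^ ((d + 2 : ℝ) / (2 * d)) * b2 ^ ((1:ℝ)/2) * mr ^ ((2:ℝ)/d) :=
        hopt
end

section
/- Let S, T be two C₀-semigroups of contractions on L²(ℝ^d) with 0 ≤ S(t)f ≤ T(t)f for all t ≥ 0 and all 0 ≤ f ∈ L²(ℝ^d). If 0 ≤ f ∈ L² and t_n ↓ 0 with S(t_n)f → f in L², then T(t_n)f → f in L². -/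
open MeasureTheory Filter

lemma l2_inner_nonneg {α : Type*} [MeasurableSpace α] {μ : Measure α}
    (g h : Lp ℝ 2 μ) (hg : 0 ≤ g) (hh : 0 ≤ h) : (0 : ℝ) ≤ inner ℝ g h := by
  rw [MeasureTheory.L2.inner_def]
  apply integral_nonneg_of_ae
  filter_upwards [(Lp.coeFn_nonneg (μ := μ) (f := g)).mpr hg, (Lp.coeFn_nonneg (μ := μ) (f := h)).mpr hh]
    with x hx1 hx2
  simpa [RCLike.inner_apply] using mul_nonneg hx2 hx1

set_option maxHeartbeats 1000000 in
/-- Squeezing argument: if `0 ≤ S(t)f ≤ T(t)f` for contractions `S, T` and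
`S(t_n)f → f` along `t_n ↓ 0`, then also `T(t_n)f → f`. -/
theorem squeeze_strong_continuity (d : ℕ)
    (S T : ℝ → (Lp ℝ 2 (volume : Measure (EuclideanSpace ℝ (Fin d))) →L[ℝ]
      Lp ℝ 2 (volume : Measure (EuclideanSpace ℝ (Fin d)))))
    (hScontr : ∀ t, 0 ≤ t → ∀ f, ‖S t f‖ ≤ ‖f‖)
    (hTcontr : ∀ t, 0 ≤ t → ∀ f, ‖T t f‖ ≤ ‖f‖)
    (hdom : ∀ t, 0 ≤ t → ∀ f, 0 ≤ f → 0 ≤ S t f ∧ S t f ≤ T t f)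
    (f : Lp ℝ 2 (volume : Measure (EuclideanSpace ℝ (Fin d)))) (hf : 0 ≤ f)
    (ts : ℕ → ℝ) (hts : ∀ n, 0 < ts n) (hanti : Antitone ts)
    (hlim : Tendsto ts atTop (nhds 0))
    (hS : Tendsto (fun n => S (ts n) f) atTop (nhds f)) :
    Tendsto (fun n => T (ts n) f) atTop (nhds f) := by
  have key : ∀ n, ‖T (ts n) f - S (ts n) f‖ ^ 2 ≤ ‖f‖ ^ 2 - ‖S (ts n) f‖ ^ 2 := by
    intro n
    set g := S (ts n) f with hg
    set h := T (ts n) f with hh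
    have ht0 := (hts n).le
    obtain ⟨hg0, hgh⟩ := hdom _ ht0 f hf
    have hinner : (‖g‖ : ℝ) ^ 2 ≤ inner ℝ h g := by
      have := l2_inner_nonneg g (h - g) hg0 (sub_nonneg.mpr hgh)
      rw [inner_sub_right, real_inner_self_eq_norm_sq] at this
      have hcomm : (inner ℝ h g : ℝ) = inner ℝ g h := real_inner_comm g h
      linarith
    have hexp : ‖h - g‖ ^ 2 = ‖h‖ ^ 2 - 2 * inner ℝ h g + ‖g‖ ^ 2 :=
      norm_sub_sq_real h g
    have hTb : ‖h‖ ≤ ‖f‖ := hTcontr _ ht0 f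
    have hTb2 : ‖h‖ ^ 2 ≤ ‖f‖ ^ 2 := by
      have := norm_nonneg h
      nlinarith
    nlinarith [hexp, hinner, hTb2]
  have hnorm : Tendsto (fun n => ‖f‖ ^ 2 - ‖S (ts n) f‖ ^ 2) atTop (nhds 0) := by
    have h1 : Tendsto (fun n => ‖S (ts n) f‖ ^ 2) atTop (nhds (‖f‖ ^ 2)) :=
      (hS.norm).pow 2
    have := (tendsto_const_nhds (x := ‖f‖ ^ 2)).sub h1
    simpa using this
  have hsq : Tendsto (fun n => ‖T (ts n) f - S (ts n) f‖ ^ 2) atTop (nhds 0) := by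
    refine squeeze_zero (fun n => by positivity) key hnorm
  have hdiff : Tendsto (fun n => ‖T (ts n) f - S (ts n) f‖) atTop (nhds 0) := by
    have h2 := (Real.continuous_sqrt.tendsto 0).comp hsq
    have heq : (fun n => Real.sqrt (‖T (ts n) f - S (ts n) f‖ ^ 2))
        = fun n => ‖T (ts n) f - S (ts n) f‖ := by
      funext n; exact Real.sqrt_sq (norm_nonneg _)
    rw [Function.comp_def, heq, Real.sqrt_zero] at h2
    exact h2
  have hdiff' : Tendsto (fun n => T (ts n) f - S (ts n) f) atTop (nhds 0) :=
    tendsto_zero_iff_norm_tendsto_zero.mpr hdiff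
  have hfin := hS.add hdiff'
  have heq : (fun n => S (ts n) f + (T (ts n) f - S (ts n) f))
      = fun n => T (ts n) f := by
    funext n; abel
  rw [heq, add_zero] at hfin
  exact hfin
end
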